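/- There is no Lie subalgebra over ℝ of sl(2,ℂ)_ℝ of real dimension 5. -/

import Mathlib

open Matrix Complex

attribute [local instance 100] LieRing.ofAssociativeRing

noncomputable section
abbrev M2 : Type := Matrix (Fin 2) (Fin 2) ℂ

def sl2cR : LieSubalgebra ℝ M2 where
  carrier := {X | X.trace = 0}
  add_mem' := by
    intro X Y hX hY
    simp only [Set.mem_setOf_eq] at *
    rw [Matrix.trace_add, hX, hY, add_zero]
  zero_mem' := by simp
  smul_mem' := by
    intro c X hX
    simp only [Set.mem_setOf_eq] at *
    rw [Matrix.trace_smul, hX, smul_zero]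
  lie_mem' := by
    intro X Y _ _
    simp only [Set.mem_setOf_eq]
    rw [Ring.lie_def, Matrix.trace_sub, Matrix.trace_mul_comm, sub_self]

instance : FiniteDimensional ℝ M2 := Module.Finite.trans ℂ M2

def slC : Submodule ℂ M2 := LinearMap.ker (Matrix.traceLinearMap (Fin 2) ℂ ℂ)

lemma mem_slC (x : M2) : x ∈ slC ↔ x.trace = 0 := by
  simp [slC, LinearMap.mem_ker, Matrix.traceLinearMap]

lemma finrank_slC : Module.finrank ℂ slC = 3 := by
  have hsurj : LinearMap.range (Matrix.traceLinearMap (Fin 2) ℂ ℂ) = ⊤ := by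
    rw [LinearMap.range_eq_top]
    intro c
    exact ⟨!![c,0;0,0], by simp [Matrix.traceLinearMap, Matrix.trace_fin_two]⟩
  have h := LinearMap.finrank_range_add_finrank_ker (Matrix.traceLinearMap (Fin 2) ℂ ℂ)
  rw [hsurj, finrank_top, Module.finrank_self] at h
  have hM : Module.finrank ℂ M2 = 4 := by
    rw [Module.finrank_matrix, Module.finrank_self]
    simp
  rw [hM] at h
  show Module.finrank ℂ (LinearMap.ker (Matrix.traceLinearMap (Fin 2) ℂ ℂ)) = 3
  omega

lemma finrank_restrict (p : Submodule ℂ M2) :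
    Module.finrank ℝ (p.restrictScalars ℝ) = 2 * Module.finrank ℂ p := by
  have e := (Submodule.restrictScalarsEquiv ℝ ℂ M2 p).restrictScalars ℝ
  rw [e.finrank_eq, ← Module.finrank_mul_finrank ℝ ℂ p, Complex.finrank_real_complex]

lemma csmul_decomp (c : ℂ) (x : M2) :
    c • x = c.re • x + c.im • (Complex.I • x) := by
  conv_lhs => rw [← Complex.re_add_im c]
  rw [add_smul, mul_smul]
  rw [show ((c.re : ℂ)) = algebraMap ℝ ℂ c.re from rfl,
      show ((c.im : ℂ)) = algebraMap ℝ ℂ c.im from rfl,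
      algebraMap_smul, algebraMap_smul]

def matE : M2 := !![0,1;0,0]
def matF : M2 := !![0,0;1,0]
def matH : M2 := !![1,0;0,-1]

lemma lie_def' (x y : M2) : ⁅x,y⁆ = x*y - y*x := rfl

lemma traceless_decomp (z : M2) (hz : z.trace = 0) :
    z = z 0 0 • matH + z 0 1 • matE + z 1 0 • matF := by
  rw [Matrix.trace_fin_two] at hz
  have h11 : z 1 1 = - z 0 0 := by linear_combination hz
  ext i j
  fin_cases i <;> fin_cases j <;> simp [matE, matF, matH, h11]

/-- If a complex submodule `I` of traceless matrices is bracket-stable under all traceless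
matrices and nonzero, it contains all traceless matrices. -/
lemma ideal_all (I : Submodule ℂ M2)
    (htr : ∀ x ∈ I, Matrix.trace x = 0)
    (hid : ∀ x : M2, x.trace = 0 → ∀ y ∈ I, ⁅x,y⁆ ∈ I)
    (x : M2) (hx : x ∈ I) (hx0 : x ≠ 0) :
    ∀ z : M2, z.trace = 0 → z ∈ I := by
  have htrE : Matrix.trace matE = 0 := by simp [matE, Matrix.trace_fin_two]
  have htrF : Matrix.trace matF = 0 := by simp [matF, Matrix.trace_fin_two]
  have htrH : Matrix.trace matH = 0 := by simp [matH, Matrix.trace_fin_two]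
  -- once one of E, F, H is in I, all are
  have key : matE ∈ I ∨ matF ∈ I ∨ matH ∈ I → ∀ z : M2, z.trace = 0 → z ∈ I := by
    intro h
    have hH : matH ∈ I := by
      rcases h with h | h | h
      · have := hid matF htrF matE h
        have e : ⁅matF, matE⁆ = (-1 : ℂ) • matH := by simp [lie_def', matE, matF, matH]
        rw [e] at this
        have := I.smul_mem (-1 : ℂ) this
        simpa using this
      · have := hid matE htrE matF h
        have e : ⁅matE, matF⁆ = matH := by simp [lie_def', matE, matF, matH]
        rwa [e] at this
      · exact h
    have hE : matE ∈ I := by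
      have := hid matE htrE matH hH
      have e : ⁅matE, matH⁆ = (-2 : ℂ) • matE := by
        ext i j; fin_cases i <;> fin_cases j <;> simp [lie_def', matE, matH] <;> norm_num
      rw [e] at this
      have := I.smul_mem (-2 : ℂ)⁻¹ this
      rw [smul_smul] at this; norm_num at this; exact this
    have hF : matF ∈ I := by
      have := hid matF htrF matH hH
      have e : ⁅matF, matH⁆ = (2 : ℂ) • matF := by
        ext i j; fin_cases i <;> fin_cases j <;> simp [lie_def', matF, matH] <;> norm_num
      rw [e] at this
      have := I.smul_mem (2 : ℂ)⁻¹ this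
      rw [smul_smul] at this; norm_num at this; exact this
    intro z hz
    rw [traceless_decomp z hz]
    exact I.add_mem (I.add_mem (I.smul_mem _ hH) (I.smul_mem _ hE)) (I.smul_mem _ hF)
  apply key
  -- case analysis on entries of x
  have hxtr := htr x hx
  rw [Matrix.trace_fin_two] at hxtr
  have h11 : x 1 1 = - x 0 0 := by linear_combination hxtr
  by_cases hc : x 1 0 ≠ 0
  · left
    have h1 := hid matE htrE x hx
    have h2 := hid matE htrE _ h1
    have e : ⁅matE, ⁅matE, x⁆⁆ = (-2 * x 1 0) • matE := by
      rw [Matrix.eta_fin_two x]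
      simp only [lie_def', matE]
      ext i j; fin_cases i <;> fin_cases j <;>
        simp [Matrix.mul_apply, Fin.sum_univ_two, Matrix.sub_apply] <;> ring
    rw [e] at h2
    have := I.smul_mem (-2 * x 1 0)⁻¹ h2
    rw [smul_smul, inv_mul_cancel₀ (by simpa using hc)] at this
    · simpa using this
  push_neg at hc
  by_cases hb : x 0 1 ≠ 0
  · right; left
    have h1 := hid matF htrF x hx
    have h2 := hid matF htrF _ h1
    have e : ⁅matF, ⁅matF, x⁆⁆ = (-2 * x 0 1) • matF := by
      rw [Matrix.eta_fin_two x]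
      simp only [lie_def', matF]
      ext i j; fin_cases i <;> fin_cases j <;>
        simp [Matrix.mul_apply, Fin.sum_univ_two, Matrix.sub_apply] <;> ring
    rw [e] at h2
    have := I.smul_mem (-2 * x 0 1)⁻¹ h2
    rw [smul_smul, inv_mul_cancel₀ (by simpa using hb)] at this
    simpa using this
  push_neg at hb
  right; right
  have ha : x 0 0 ≠ 0 := by
    intro ha
    apply hx0
    ext i j; fin_cases i <;> fin_cases j <;> simp [ha, hb, hc, h11]
  have e : x = x 0 0 • matH := by
    ext i j; fin_cases i <;> fin_cases j <;> simp [matH, hb, hc, h11]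
  rw [e] at hx
  have := I.smul_mem (x 0 0)⁻¹ hx
  rw [smul_smul, inv_mul_cancel₀ ha, one_smul] at this
  exact this

theorem no_subalgebra_sl2cR_dim_five :
    ¬ ∃ 𝔥 : LieSubalgebra ℝ M2, 𝔥 ≤ sl2cR ∧ Module.finrank ℝ 𝔥 = 5 := by
  rintro ⟨𝔥, hle, h5⟩
  set Hs : Submodule ℝ M2 := 𝔥.toSubmodule with hHs
  have hle' : ∀ x ∈ Hs, Matrix.trace x = 0 := fun x hx => hle hx
  -- the "multiplication by I" real-linear equivalence
  set e : M2 ≃ₗ[ℝ] M2 :=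
    (LinearEquiv.smulOfNeZero ℂ M2 Complex.I Complex.I_ne_zero).restrictScalars ℝ with he
  have he_apply : ∀ x : M2, (e : M2 →ₗ[ℝ] M2) x = Complex.I • x := fun x => rfl
  have h5' : Module.finrank ℝ Hs = 5 := h5
  set iH : Submodule ℝ M2 := Hs.map e.toLinearMap with hiH
  have hiH5 : Module.finrank ℝ iH = 5 := by
    rw [hiH, LinearEquiv.finrank_map_eq e Hs]; exact h5'
  have hsl_r : Module.finrank ℝ (slC.restrictScalars ℝ) = 6 := by
    rw [finrank_restrict, finrank_slC]
  have hHs_le : Hs ≤ slC.restrictScalars ℝ := by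
    intro x hx
    rw [Submodule.restrictScalars_mem, mem_slC]
    exact hle' x hx
  have hiH_le : iH ≤ slC.restrictScalars ℝ := by
    rintro x ⟨y, hy, rfl⟩
    rw [Submodule.restrictScalars_mem, mem_slC, he_apply, Matrix.trace_smul]
    rw [hle' y hy, smul_zero]
  have hsup : Module.finrank ℝ (Hs ⊔ iH : Submodule ℝ M2) ≤ 6 := by
    rw [← hsl_r]
    exact Submodule.finrank_mono (sup_le hHs_le hiH_le)
  have hdim := Submodule.finrank_sup_add_finrank_inf_eq Hs iH
  rw [h5', hiH5] at hdim
  have hinf : 4 ≤ Module.finrank ℝ (Hs ⊓ iH : Submodule ℝ M2) := by omega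
  -- K_c : the complex points of 𝔥
  have smul_mem_aux : ∀ (c : ℂ) (x : M2), x ∈ Hs → Complex.I • x ∈ Hs → c • x ∈ Hs := by
    intro c x h1 h2
    rw [csmul_decomp]
    exact Hs.add_mem (Hs.smul_mem _ h1) (Hs.smul_mem _ h2)
  set K : Submodule ℂ M2 :=
    { carrier := {x | x ∈ Hs ∧ Complex.I • x ∈ Hs}
      add_mem' := by
        rintro a b ⟨ha1, ha2⟩ ⟨hb1, hb2⟩
        refine ⟨Hs.add_mem ha1 hb1, ?_⟩
        rw [smul_add]
        exact Hs.add_mem ha2 hb2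
      zero_mem' := by simp
      smul_mem' := by
        rintro c x ⟨h1, h2⟩
        refine ⟨smul_mem_aux c x h1 h2, ?_⟩
        rw [smul_comm]
        refine smul_mem_aux c _ h2 ?_
        rw [smul_smul, Complex.I_mul_I, neg_one_smul]
        exact Hs.neg_mem h1 } with hK
  have hK_mem : ∀ x : M2, x ∈ K ↔ x ∈ Hs ∧ Complex.I • x ∈ Hs := fun x => Iff.rfl
  have hK_eq : K.restrictScalars ℝ = Hs ⊓ iH := by
    ext x
    rw [Submodule.restrictScalars_mem, hK_mem, Submodule.mem_inf]
    constructor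
    · rintro ⟨h1, h2⟩
      refine ⟨h1, ⟨-(Complex.I • x), Hs.neg_mem h2, ?_⟩⟩
      rw [he_apply, smul_neg, smul_smul, Complex.I_mul_I, neg_one_smul, neg_neg]
    · rintro ⟨h1, ⟨y, hy, rfl⟩⟩
      rw [he_apply]
      refine ⟨h1, ?_⟩
      rw [smul_smul, Complex.I_mul_I, neg_one_smul]
      exact Hs.neg_mem hy
  have hK_le_Hs : K.restrictScalars ℝ ≤ Hs := fun x hx => hx.1
  have hK2 : Module.finrank ℂ K = 2 := by
    have h1 : 4 ≤ 2 * Module.finrank ℂ K := by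
      rw [← finrank_restrict, hK_eq]; exact hinf
    have h2 : 2 * Module.finrank ℂ K ≤ 5 := by
      rw [← finrank_restrict, ← h5']
      exact Submodule.finrank_mono hK_le_Hs
    omega
  -- N : normalizer of K inside slC
  set N : Submodule ℂ M2 :=
    { carrier := {x | x.trace = 0 ∧ ∀ y ∈ K, ⁅x, y⁆ ∈ K}
      add_mem' := by
        rintro a b ⟨ha1, ha2⟩ ⟨hb1, hb2⟩
        refine ⟨by rw [Matrix.trace_add, ha1, hb1, add_zero], fun y hy => ?_⟩
        rw [add_lie]
        exact K.add_mem (ha2 y hy) (hb2 y hy)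
      zero_mem' := ⟨by simp, fun y hy => by rw [zero_lie]; exact K.zero_mem⟩
      smul_mem' := by
        rintro c x ⟨h1, h2⟩
        refine ⟨by rw [Matrix.trace_smul, h1, smul_zero], fun y hy => ?_⟩
        rw [smul_lie]
        exact K.smul_mem c (h2 y hy) } with hN
  have hN_mem : ∀ x : M2, x ∈ N ↔ x.trace = 0 ∧ ∀ y ∈ K, ⁅x, y⁆ ∈ K := fun x => Iff.rfl
  have hHs_le_N : Hs ≤ N.restrictScalars ℝ := by
    intro x hx
    rw [Submodule.restrictScalars_mem, hN_mem]
    refine ⟨hle' x hx, fun y hy => ?_⟩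
    rw [hK_mem] at hy ⊢
    refine ⟨𝔥.lie_mem hx hy.1, ?_⟩
    rw [← lie_smul]
    exact 𝔥.lie_mem hx hy.2
  have hN_le : N ≤ slC := by
    intro x hx
    rw [mem_slC]
    exact hx.1
  have hN3 : Module.finrank ℂ N = 3 := by
    have h1 : 5 ≤ 2 * Module.finrank ℂ N := by
      rw [← finrank_restrict, ← h5']
      exact Submodule.finrank_mono hHs_le_N
    have h2 : Module.finrank ℂ N ≤ 3 := by
      rw [← finrank_slC]
      exact Submodule.finrank_mono hN_le
    omega
  have hN_eq : N = slC := Submodule.eq_of_le_of_finrank_le hN_le (by rw [hN3, finrank_slC])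
  have hKne : K ≠ ⊥ := by
    intro hbot
    have h0 : Module.finrank ℂ K = 0 := Submodule.finrank_eq_zero.mpr hbot
    omega
  obtain ⟨x, hxK, hx0⟩ := Submodule.exists_mem_ne_zero_of_ne_bot hKne
  have hall := ideal_all K (fun y hy => hle' y hy.1)
    (fun z hz y hy => by
      have hzN : z ∈ N := by rw [hN_eq, mem_slC]; exact hz
      exact hzN.2 y hy) x hxK hx0
  have hsl_le_K : slC ≤ K := fun z hz => hall z ((mem_slC z).1 hz)
  have hcon := Submodule.finrank_mono hsl_le_K
  rw [finrank_slC, hK2] at hcon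
  omega

end
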